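/- With b₁ < n*, b₂ < m*, and n* = m*, in the zero-sum game where the defender chooses S with |S| ≤ b₁, the attacker chooses T with |T| ≤ b₂, and the defender's payoff is F(S,T), the value of the game equals b₁·b₂/n*, and the strategy profile (uniform over cyclic b₁-windows of a minimum set cover, uniform over cyclic b₂-windows of a maximum set packing) is a Nash equilibrium. -/

import Mathlib

open Finset

noncomputable def defenderPayoff {V E : Type*} [DecidableEq V] [DecidableEq E]
    [Fintype V] [Fintype E] (C : V → Finset E)
    (σ1 : Finset V → ℝ) (σ2 : Finset E → ℝ) : ℝ :=
  ∑ S : Finset V, ∑ T : Finset E,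
    σ1 S * σ2 T * ((S.biUnion C ∩ T).card : ℝ)

noncomputable def attackerPayoff {V E : Type*} [DecidableEq V] [DecidableEq E]
    [Fintype V] [Fintype E] (C : V → Finset E)
    (σ1 : Finset V → ℝ) (σ2 : Finset E → ℝ) : ℝ :=
  ∑ S : Finset V, ∑ T : Finset E,
    σ1 S * σ2 T * ((T.card : ℝ) - ((S.biUnion C ∩ T).card : ℝ))

def IsMixed {α : Type*} [Fintype α] [DecidableEq α] (b : ℕ) (σ : Finset α → ℝ) : Prop :=
  (∀ A, 0 ≤ σ A) ∧ (∑ A : Finset α, σ A = 1) ∧ (∀ A, σ A ≠ 0 → A.card ≤ b)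


section aux
variable {n : ℕ} [NeZero n]

lemma natCast_injOn_range' (b : ℕ) (hb : b ≤ n) {x y : ℕ}
    (hx : x < b) (hy : y < b) (hxy : (x : ZMod n) = y) : x = y := by
  have h1 := ZMod.val_cast_of_lt (lt_of_lt_of_le hx hb)
  have h2 := ZMod.val_cast_of_lt (lt_of_lt_of_le hy hb)
  rw [← h1, ← h2, hxy]

lemma windowCount (b : ℕ) (hb : b ≤ n) (m : ZMod n) :
    (univ.filter fun k : ZMod n => ∃ t < b, k + (t : ZMod n) = m).card = b := by
  have hset : (univ.filter fun k : ZMod n => ∃ t < b, k + (t : ZMod n) = m)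
      = (range b).image (fun t : ℕ => m - (t : ZMod n)) := by
    ext k
    simp only [mem_filter, mem_univ, true_and, mem_image, mem_range]
    constructor
    · rintro ⟨t, ht, hk⟩; exact ⟨t, ht, by rw [← hk]; ring⟩
    · rintro ⟨t, ht, rfl⟩; exact ⟨t, ht, by ring⟩
  rw [hset, card_image_of_injOn, card_range]
  intro x hx y hy hxy
  simp only [coe_range, Set.mem_Iio] at hx hy
  exact natCast_injOn_range' b hb hx hy (by
    have : (m - (x : ZMod n)) = m - (y : ZMod n) := hxy
    have := sub_right_injective this
    exact this)

lemma card_window (b : ℕ) (hb : b ≤ n) (k : ZMod n) :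
    ((range b).image (fun t : ℕ => k + (t : ZMod n))).card = b := by
  rw [card_image_of_injOn, card_range]
  intro x hx y hy hxy
  simp only [coe_range, Set.mem_Iio] at hx hy
  exact natCast_injOn_range' b hb hx hy (add_left_cancel hxy)

lemma coverCount_le {V E : Type*} [DecidableEq V] [DecidableEq E] [Fintype E]
    (g : ZMod n → E) (hg : Function.Injective g) (C : V → Finset E)
    (hpack : ∀ i : V, (C i ∩ Finset.univ.image g).card ≤ 1) (S : Finset V) :
    (univ.filter fun m : ZMod n => g m ∈ S.biUnion C).card ≤ S.card := by
  rw [← card_image_of_injective (univ.filter fun m : ZMod n => g m ∈ S.biUnion C) hg]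
  have h2 : (univ.filter fun m : ZMod n => g m ∈ S.biUnion C).image g
      ⊆ S.biUnion (fun i => C i ∩ univ.image g) := by
    intro e he
    simp only [mem_image, mem_filter, mem_univ, true_and] at he
    obtain ⟨m, hm, rfl⟩ := he
    rw [mem_biUnion] at hm ⊢
    obtain ⟨i, hi, hCi⟩ := hm
    exact ⟨i, hi, mem_inter.2 ⟨hCi, mem_image_of_mem g (mem_univ m)⟩⟩
  calc _ ≤ (S.biUnion fun i => C i ∩ univ.image g).card := card_le_card h2
    _ ≤ ∑ i ∈ S, (C i ∩ univ.image g).card := card_biUnion_le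
    _ ≤ ∑ _i ∈ S, 1 := sum_le_sum fun i _ => hpack i
    _ = S.card := by simp

lemma sum_inter_window {E : Type*} [DecidableEq E] [Fintype E]
    (g : ZMod n → E) (hg : Function.Injective g)
    (b : ℕ) (hb : b ≤ n) (X : Finset E) :
    ∑ k : ZMod n, (X ∩ (range b).image (fun t : ℕ => g (k + (t : ZMod n)))).card
      = b * (univ.filter fun m : ZMod n => g m ∈ X).card := by
  have step1 : ∀ k : ZMod n,
      (X ∩ (range b).image (fun t : ℕ => g (k + (t : ZMod n)))).card
      = (univ.filter fun m : ZMod n => (∃ t < b, k + (t:ZMod n) = m) ∧ g m ∈ X).card := by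
    intro k
    have himg : (range b).image (fun t : ℕ => g (k + (t : ZMod n)))
        = ((range b).image (fun t : ℕ => k + (t : ZMod n))).image g := by
      rw [image_image]; rfl
    have hXW : X ∩ (range b).image (fun t : ℕ => g (k + (t : ZMod n)))
        = ((univ.filter fun m : ZMod n => (∃ t < b, k + (t:ZMod n) = m) ∧ g m ∈ X)).image g := by
      rw [himg]
      ext e
      simp only [mem_inter, mem_image, mem_filter, mem_univ, true_and, mem_range]
      constructor
      · rintro ⟨heX, m, ⟨t, ht, rfl⟩, rfl⟩
        exact ⟨k + t, ⟨⟨t, ht, rfl⟩, heX⟩, rfl⟩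
      · rintro ⟨m, ⟨⟨t, ht, rfl⟩, heX⟩, rfl⟩
        exact ⟨heX, k + t, ⟨t, ht, rfl⟩, rfl⟩
    rw [hXW, card_image_of_injective _ hg]
  simp only [step1]
  have step2 : ∀ k : ZMod n,
      (univ.filter fun m : ZMod n => (∃ t < b, k + (t:ZMod n) = m) ∧ g m ∈ X).card
      = ∑ m : ZMod n, if (∃ t < b, k + (t:ZMod n) = m) ∧ g m ∈ X then 1 else 0 := by
    intro k; rw [card_filter]
  simp only [step2]
  rw [Finset.sum_comm]
  have step3 : ∀ m : ZMod n,
      (∑ k : ZMod n, if (∃ t < b, k + (t:ZMod n) = m) ∧ g m ∈ X then 1 else 0)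
      = if g m ∈ X then b else 0 := by
    intro m
    by_cases hm : g m ∈ X
    · simp only [hm, and_true, if_pos]
      rw [← card_filter, windowCount b hb m]
    · simp [hm]
  simp only [step3]
  rw [Finset.sum_ite, Finset.sum_const, Finset.sum_const]
  simp [mul_comm]

end aux

lemma fiber_sum {α β : Type*} [Fintype α] [Fintype β] [DecidableEq β]
    (F : α → β) (h : β → ℝ) :
    ∑ T : β, (((univ.filter fun k => F k = T).card : ℕ) : ℝ) * h T = ∑ k : α, h (F k) := by
  rw [← Finset.sum_fiberwise univ F (fun k => h (F k))]
  refine Finset.sum_congr rfl fun T _ => ?_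
  rw [Finset.sum_congr rfl (fun k hk => by rw [(mem_filter.1 hk).2]),
    Finset.sum_const, nsmul_eq_mul]

section aux2
variable {n : ℕ} [NeZero n]

lemma coverage_ge {V E : Type*} [DecidableEq V] [DecidableEq E]
    (C : V → Finset E) (f : ZMod n → V) (b : ℕ) (hb : b ≤ n)
    (e : E) (k₀ : ZMod n) (he : e ∈ C (f k₀)) :
    b ≤ (univ.filter fun j : ZMod n =>
      e ∈ ((range b).image (fun t : ℕ => f (j + (t : ZMod n)))).biUnion C).card := by
  refine (windowCount b hb k₀).symm.le.trans (card_le_card ?_)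
  intro j hj
  simp only [mem_filter, mem_univ, true_and] at hj ⊢
  obtain ⟨t, ht, hjt⟩ := hj
  exact mem_biUnion.2 ⟨f k₀, mem_image.2 ⟨t, mem_range.2 ht, by rw [hjt]⟩, he⟩

lemma sum_inter_ge {V E : Type*} [DecidableEq V] [DecidableEq E] [Fintype E]
    (C : V → Finset E) (f : ZMod n → V) (b : ℕ) (hb : b ≤ n)
    (hcover : ∀ e : E, ∃ k : ZMod n, e ∈ C (f k)) (T : Finset E) :
    b * T.card ≤ ∑ j : ZMod n,
      ((((range b).image (fun t : ℕ => f (j + (t : ZMod n)))).biUnion C) ∩ T).card := by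
  have hcard : ∀ j : ZMod n,
      ((((range b).image (fun t : ℕ => f (j + (t : ZMod n)))).biUnion C) ∩ T).card
      = ∑ e ∈ T, if e ∈ (((range b).image (fun t : ℕ => f (j + (t : ZMod n)))).biUnion C)
          then 1 else 0 := by
    intro j
    rw [inter_comm, ← Finset.filter_mem_eq_inter, card_filter]
  simp only [hcard]
  rw [Finset.sum_comm]
  have : ∀ e ∈ T, b ≤ ∑ j : ZMod n,
      if e ∈ (((range b).image (fun t : ℕ => f (j + (t : ZMod n)))).biUnion C) then 1 else 0 := by
    intro e _
    obtain ⟨k₀, hk₀⟩ := hcover e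
    rw [← card_filter]
    exact coverage_ge C f b hb e k₀ hk₀
  calc b * T.card = ∑ _e ∈ T, b := by rw [Finset.sum_const, smul_eq_mul, mul_comm]
    _ ≤ _ := Finset.sum_le_sum this

lemma card_gwindow {E : Type*} [DecidableEq E] (g : ZMod n → E)
    (hg : Function.Injective g) (b : ℕ) (hb : b ≤ n) (k : ZMod n) :
    ((range b).image (fun t : ℕ => g (k + (t : ZMod n)))).card = b := by
  have h : (range b).image (fun t : ℕ => g (k + (t : ZMod n)))
      = ((range b).image (fun t : ℕ => k + (t : ZMod n))).image g := by
    rw [image_image]; rfl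
  rw [h, card_image_of_injective _ hg, card_window b hb k]

end aux2


theorem cyclic_profile_NE {V E : Type*} [DecidableEq V] [DecidableEq E]
    [Fintype V] [Fintype E] (C : V → Finset E) (b₁ b₂ n : ℕ) [NeZero n]
    (hmon : ∀ e : E, ∃ i : V, e ∈ C i)
    (f : ZMod n → V) (hf : Function.Injective f)
    (hcover : ∀ e : E, ∃ k : ZMod n, e ∈ C (f k))
    (hmincover : ∀ S : Finset V, (∀ e : E, ∃ i ∈ S, e ∈ C i) → n ≤ S.card)
    (g : ZMod n → E) (hg : Function.Injective g)
    (hpack : ∀ i : V, (C i ∩ Finset.univ.image g).card ≤ 1)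
    (hmaxpack : ∀ T : Finset E, (∀ i : V, (C i ∩ T).card ≤ 1) → T.card ≤ n)
    (hb1 : b₁ < n) (hb2 : b₂ < n)
    (σ1 : Finset V → ℝ)
    (hσ1 : σ1 = fun S => ((Finset.univ.filter (fun k : ZMod n =>
      (Finset.range b₁).image (fun t : ℕ => f (k + (t : ZMod n))) = S)).card : ℝ) / n)
    (σ2 : Finset E → ℝ)
    (hσ2 : σ2 = fun T => ((Finset.univ.filter (fun k : ZMod n =>
      (Finset.range b₂).image (fun t : ℕ => g (k + (t : ZMod n))) = T)).card : ℝ) / n) :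
    (∀ τ1 : Finset V → ℝ, IsMixed b₁ τ1 →
        defenderPayoff C τ1 σ2 ≤ defenderPayoff C σ1 σ2) ∧
    (∀ τ2 : Finset E → ℝ, IsMixed b₂ τ2 →
        attackerPayoff C σ1 τ2 ≤ attackerPayoff C σ1 σ2) ∧
    defenderPayoff C σ1 σ2 = (b₁ : ℝ) * b₂ / n := by
  have hn0 : (0:ℝ) < n := by exact_mod_cast (NeZero.pos n)
  have hN : (n:ℝ) ≠ 0 := ne_of_gt hn0
  have hb1n : b₁ ≤ n := hb1.le
  have hb2n : b₂ ≤ n := hb2.le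
  set Sw : ZMod n → Finset V :=
    fun k => (Finset.range b₁).image (fun t : ℕ => f (k + (t : ZMod n))) with hSw
  set Tw : ZMod n → Finset E :=
    fun k => (Finset.range b₂).image (fun t : ℕ => g (k + (t : ZMod n))) with hTw
  have hcardZ : Fintype.card (ZMod n) = n := ZMod.card n
  -- ℕ facts
  have hcardSw : ∀ j, (Sw j).card ≤ b₁ := fun j =>
    (card_image_le).trans_eq (card_range b₁)
  have hcardTw : ∀ k, (Tw k).card = b₂ := fun k => card_gwindow g hg b₂ hb2n k
  have hwin : ∀ S : Finset V, ∑ k : ZMod n, ((S.biUnion C ∩ Tw k).card)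
      = b₂ * (univ.filter fun m : ZMod n => g m ∈ S.biUnion C).card :=
    fun S => sum_inter_window g hg b₂ hb2n _
  have hcc : ∀ S : Finset V,
      (univ.filter fun m : ZMod n => g m ∈ S.biUnion C).card ≤ S.card :=
    coverCount_le g hg C hpack
  have hgeT : ∀ T : Finset E, b₁ * T.card ≤ ∑ j : ZMod n, ((Sw j).biUnion C ∩ T).card :=
    fun T => sum_inter_ge C f b₁ hb1n hcover T
  have hSTle : ∀ S : Finset V, S.card ≤ b₁ →
      ∑ k : ZMod n, ((S.biUnion C ∩ Tw k).card) ≤ b₁ * b₂ := by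
    intro S hS
    rw [hwin S]
    calc b₂ * (univ.filter fun m : ZMod n => g m ∈ S.biUnion C).card
        ≤ b₂ * b₁ := Nat.mul_le_mul_left _ ((hcc S).trans hS)
      _ = b₁ * b₂ := Nat.mul_comm _ _
  have Etot : ∑ j : ZMod n, ∑ k : ZMod n, ((Sw j).biUnion C ∩ Tw k).card
      = n * (b₁ * b₂) := by
    apply le_antisymm
    · calc ∑ j : ZMod n, ∑ k : ZMod n, ((Sw j).biUnion C ∩ Tw k).card
          ≤ ∑ _j : ZMod n, b₁ * b₂ :=
            Finset.sum_le_sum fun j _ => hSTle (Sw j) (hcardSw j)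
        _ = n * (b₁ * b₂) := by
            rw [Finset.sum_const, Finset.card_univ, hcardZ, smul_eq_mul]
    · calc n * (b₁ * b₂) = ∑ _k : ZMod n, b₁ * b₂ := by
            rw [Finset.sum_const, Finset.card_univ, hcardZ, smul_eq_mul]
        _ ≤ ∑ k : ZMod n, ∑ j : ZMod n, ((Sw j).biUnion C ∩ Tw k).card := by
            refine Finset.sum_le_sum fun k _ => ?_
            have := hgeT (Tw k)
            rwa [hcardTw k] at this
        _ = ∑ j : ZMod n, ∑ k : ZMod n, ((Sw j).biUnion C ∩ Tw k).card :=
            Finset.sum_comm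
  -- real facts
  have h1 : ∀ h : Finset V → ℝ, ∑ S : Finset V, σ1 S * h S
      = (∑ j : ZMod n, h (Sw j)) / n := by
    intro h
    simp only [hσ1]
    rw [← fiber_sum Sw h, Finset.sum_div]
    exact Finset.sum_congr rfl fun S _ => div_mul_eq_mul_div _ _ _
  have h2 : ∀ h : Finset E → ℝ, ∑ T : Finset E, σ2 T * h T
      = (∑ k : ZMod n, h (Tw k)) / n := by
    intro h
    simp only [hσ2]
    rw [← fiber_sum Tw h, Finset.sum_div]
    exact Finset.sum_congr rfl fun T _ => div_mul_eq_mul_div _ _ _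
  have hσ1sum : ∑ S : Finset V, σ1 S = 1 := by
    have h := h1 (fun _ => 1)
    simp only [mul_one] at h
    rw [h, Finset.sum_const, Finset.card_univ, hcardZ, nsmul_eq_mul, mul_one,
      div_self hN]
  -- defender payoff reshaping
  have hdef : ∀ τ : Finset V → ℝ, defenderPayoff C τ σ2
      = ∑ S : Finset V, τ S * ∑ T : Finset E, σ2 T * ((S.biUnion C ∩ T).card : ℝ) := by
    intro τ
    unfold defenderPayoff
    refine Finset.sum_congr rfl fun S _ => ?_
    rw [Finset.mul_sum]
    exact Finset.sum_congr rfl fun T _ => by ring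
  have hDle : ∀ S : Finset V, S.card ≤ b₁ →
      ∑ T : Finset E, σ2 T * ((S.biUnion C ∩ T).card : ℝ) ≤ (b₁:ℝ) * b₂ / n := by
    intro S hS
    rw [h2 (fun T => ((S.biUnion C ∩ T).card : ℝ))]
    have hle : (∑ k : ZMod n, ((S.biUnion C ∩ Tw k).card : ℝ)) ≤ (b₁:ℝ) * b₂ := by
      exact_mod_cast hSTle S hS
    gcongr
  have hval : defenderPayoff C σ1 σ2 = (b₁:ℝ) * b₂ / n := by
    rw [hdef σ1,
      h1 (fun S => ∑ T : Finset E, σ2 T * ((S.biUnion C ∩ T).card : ℝ))]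
    have hinner : ∀ j : ZMod n,
        ∑ T : Finset E, σ2 T * (((Sw j).biUnion C ∩ T).card : ℝ)
        = (∑ k : ZMod n, (((Sw j).biUnion C ∩ Tw k).card : ℝ)) / n := fun j =>
      h2 (fun T => (((Sw j).biUnion C ∩ T).card : ℝ))
    rw [Finset.sum_congr rfl fun j _ => hinner j, ← Finset.sum_div]
    have hcast : ∑ j : ZMod n, ∑ k : ZMod n, (((Sw j).biUnion C ∩ Tw k).card : ℝ)
        = (n:ℝ) * ((b₁:ℝ) * b₂) := by exact_mod_cast Etot
    rw [hcast]
    field_simp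
  -- attacker payoff reshaping
  have hatt : ∀ τ : Finset E → ℝ, attackerPayoff C σ1 τ
      = ∑ T : Finset E, τ T * ∑ S : Finset V,
          σ1 S * ((T.card : ℝ) - ((S.biUnion C ∩ T).card : ℝ)) := by
    intro τ
    unfold attackerPayoff
    rw [Finset.sum_comm]
    refine Finset.sum_congr rfl fun T _ => ?_
    rw [Finset.mul_sum]
    exact Finset.sum_congr rfl fun S _ => by ring
  have hAval : ∀ T : Finset E,
      ∑ S : Finset V, σ1 S * ((T.card : ℝ) - ((S.biUnion C ∩ T).card : ℝ))
      = (∑ j : ZMod n, ((T.card : ℝ) - (((Sw j).biUnion C ∩ T).card : ℝ))) / n :=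
    fun T => h1 (fun S => ((T.card : ℝ) - ((S.biUnion C ∩ T).card : ℝ)))
  have hAle : ∀ T : Finset E, T.card ≤ b₂ →
      ∑ S : Finset V, σ1 S * ((T.card : ℝ) - ((S.biUnion C ∩ T).card : ℝ))
        ≤ (b₂:ℝ) - (b₁:ℝ) * b₂ / n := by
    intro T hT
    rw [hAval T]
    have hkey : (b₁:ℝ) * T.card ≤ ∑ j : ZMod n, (((Sw j).biUnion C ∩ T).card : ℝ) := by
      exact_mod_cast hgeT T
    have hsplit : ∑ j : ZMod n, ((T.card : ℝ) - (((Sw j).biUnion C ∩ T).card : ℝ))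
        = (n:ℝ) * T.card - ∑ j : ZMod n, (((Sw j).biUnion C ∩ T).card : ℝ) := by
      rw [Finset.sum_sub_distrib, Finset.sum_const, Finset.card_univ, hcardZ,
        nsmul_eq_mul]
    rw [hsplit, div_le_iff₀ hn0]
    have hTc : (T.card : ℝ) ≤ b₂ := by exact_mod_cast hT
    have hb1R : (b₁:ℝ) ≤ n := by exact_mod_cast hb1n
    have hfact : (0:ℝ) ≤ ((n:ℝ) - b₁) * ((b₂:ℝ) - T.card) :=
      mul_nonneg (by linarith) (by linarith)
    have hexp : ((b₂:ℝ) - (b₁:ℝ) * b₂ / n) * n = (n:ℝ) * b₂ - (b₁:ℝ) * b₂ := by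
      field_simp
    rw [hexp]
    nlinarith [hkey, hfact]
  have hσ2card : ∑ T : Finset E, σ2 T * (T.card : ℝ) = (b₂:ℝ) := by
    rw [h2 (fun T => (T.card : ℝ))]
    have : ∀ k : ZMod n, ((Tw k).card : ℝ) = (b₂:ℝ) := fun k => by
      exact_mod_cast hcardTw k
    rw [Finset.sum_congr rfl fun k _ => this k, Finset.sum_const, Finset.card_univ,
      hcardZ, nsmul_eq_mul]
    field_simp
  have hattsplit : attackerPayoff C σ1 σ2
      = (∑ S : Finset V, σ1 S) * (∑ T : Finset E, σ2 T * (T.card : ℝ))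
        - defenderPayoff C σ1 σ2 := by
    unfold attackerPayoff defenderPayoff
    rw [Finset.sum_mul_sum, ← Finset.sum_sub_distrib]
    refine Finset.sum_congr rfl fun S _ => ?_
    rw [← Finset.sum_sub_distrib]
    exact Finset.sum_congr rfl fun T _ => by ring
  have hattval : attackerPayoff C σ1 σ2 = (b₂:ℝ) - (b₁:ℝ) * b₂ / n := by
    rw [hattsplit, hσ1sum, hσ2card, hval, one_mul]
  refine ⟨?_, ?_, hval⟩
  · intro τ hτ
    obtain ⟨hpos, hsum, hsupp⟩ := hτ
    rw [hval, hdef τ]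
    calc ∑ S : Finset V, τ S * ∑ T : Finset E, σ2 T * ((S.biUnion C ∩ T).card : ℝ)
        ≤ ∑ S : Finset V, τ S * ((b₁:ℝ) * b₂ / n) := by
          refine Finset.sum_le_sum fun S _ => ?_
          by_cases h0 : τ S = 0
          · simp [h0]
          · exact mul_le_mul_of_nonneg_left (hDle S (hsupp S h0)) (hpos S)
      _ = (b₁:ℝ) * b₂ / n := by rw [← Finset.sum_mul, hsum, one_mul]
  · intro τ hτ
    obtain ⟨hpos, hsum, hsupp⟩ := hτ
    rw [hattval, hatt τ]
    calc ∑ T : Finset E, τ T * ∑ S : Finset V,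
          σ1 S * ((T.card : ℝ) - ((S.biUnion C ∩ T).card : ℝ))
        ≤ ∑ T : Finset E, τ T * ((b₂:ℝ) - (b₁:ℝ) * b₂ / n) := by
          refine Finset.sum_le_sum fun T _ => ?_
          by_cases h0 : τ T = 0
          · simp [h0]
          · exact mul_le_mul_of_nonneg_left (hAle T (hsupp T h0)) (hpos T)
      _ = (b₂:ℝ) - (b₁:ℝ) * b₂ / n := by rw [← Finset.sum_mul, hsum, one_mul]
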